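/- Let $V, Q$ be finite dimensional real inner product spaces and suppose $G : V \to Q$ is a linear map (discrete gradient) and $J : V \to W$ a linear map into another inner product space $W$ (jump map) such that $\|v\|_{1,h,\rho}^2 := \|G v\|_Q^2 + \rho^{-1} \|J v\|_W^2$ defines a norm on $V$ for each $\rho \in (0, 1]$. Define $b(( q, \hat q), v) = \langle q, G v \rangle_Q - \langle \hat q, J v \rangle_W$ for $(q, \hat q) \in Q \times W$ with norm $\|(q,\hat q)\|_{0,\rho}^2 = \|q\|_Q^2 + \rho \|\hat q\|_W^2$ (up to equivalence constants independent of $\rho$). Then choosing $q = G v$, $\hat q = -\rho^{-1} J v$ gives $b((q, \hat q), v) = \|v\|_{1,h,\rho}^2$ and $\|(q, \hat q)\|_{0,\rho}^2 \le \|v\|^2_{1,h,\rho} + \rho^{-1}\|Jv\|_W^2 \le 2\|v\|_{1,h,\rho}^2$ when $\rho \le 1$; hence the inf-sup constant of $b$ with respect to these norms is at least $1/\sqrt{2}$, uniformly in $\rho \in (0,1]$. -/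

import Mathlib

open scoped RealInnerProductSpace

/-- Abstract uniform inf-sup for the WG form `b_w`: with broken gradient `G`,
jump map `J`, `b((q,q̂),v) = ⟪q, Gv⟫ - ⟪q̂, Jv⟫`, norms
`‖v‖²_{1,ρ} = ‖Gv‖² + ρ⁻¹‖Jv‖²` and `‖(q,q̂)‖²_{0,ρ} = ‖q‖² + ρ‖q̂‖²`, the test
choice `q = Gv`, `q̂ = -ρ⁻¹ • Jv` realizes `b = ‖v‖²_{1,ρ}`, satisfies
`‖(q,q̂)‖²_{0,ρ} ≤ 2 ‖v‖²_{1,ρ}` for `ρ ≤ 1`, and hence the inf-sup constant is at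
least `1/√2`, uniformly in `ρ ∈ (0,1]`. -/
theorem wg_uniform_infsup {V Q W : Type*}
    [NormedAddCommGroup V] [InnerProductSpace ℝ V] [FiniteDimensional ℝ V]
    [NormedAddCommGroup Q] [InnerProductSpace ℝ Q] [FiniteDimensional ℝ Q]
    [NormedAddCommGroup W] [InnerProductSpace ℝ W] [FiniteDimensional ℝ W]
    (G : V →ₗ[ℝ] Q) (J : V →ₗ[ℝ] W)
    (ρ : ℝ) (hρ0 : 0 < ρ) (hρ1 : ρ ≤ 1)
    (hnorm : ∀ v : V, ‖G v‖ ^ 2 + ρ⁻¹ * ‖J v‖ ^ 2 = 0 → v = 0) :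
    ∀ v : V,
      (⟪G v, G v⟫ - ⟪-(ρ⁻¹ • J v), J v⟫ = ‖G v‖ ^ 2 + ρ⁻¹ * ‖J v‖ ^ 2) ∧
      (‖G v‖ ^ 2 + ρ * ‖-(ρ⁻¹ • J v)‖ ^ 2 ≤ 2 * (‖G v‖ ^ 2 + ρ⁻¹ * ‖J v‖ ^ 2)) ∧
      ((1 / Real.sqrt 2) *
          (Real.sqrt (‖G v‖ ^ 2 + ρ * ‖-(ρ⁻¹ • J v)‖ ^ 2) *
            Real.sqrt (‖G v‖ ^ 2 + ρ⁻¹ * ‖J v‖ ^ 2)) ≤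
        ⟪G v, G v⟫ - ⟪-(ρ⁻¹ • J v), J v⟫) := by
  intro v
  have hb : ⟪G v, G v⟫ - ⟪-(ρ⁻¹ • J v), J v⟫ = ‖G v‖ ^ 2 + ρ⁻¹ * ‖J v‖ ^ 2 := by
    rw [inner_neg_left, real_inner_smul_left, real_inner_self_eq_norm_sq,
      real_inner_self_eq_norm_sq]
    ring
  have hS0 : 0 ≤ ‖G v‖ ^ 2 + ρ⁻¹ * ‖J v‖ ^ 2 := by
    have := inv_pos.mpr hρ0
    positivity
  have hnn : ‖-(ρ⁻¹ • J v)‖ ^ 2 = ρ⁻¹ ^ 2 * ‖J v‖ ^ 2 := by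
    rw [norm_neg, norm_smul, mul_pow, Real.norm_eq_abs,
      abs_of_pos (inv_pos.mpr hρ0)]
  have hQnorm : ‖G v‖ ^ 2 + ρ * ‖-(ρ⁻¹ • J v)‖ ^ 2
      = ‖G v‖ ^ 2 + ρ⁻¹ * ‖J v‖ ^ 2 := by
    rw [hnn]
    have : ρ * (ρ⁻¹ ^ 2 * ‖J v‖ ^ 2) = ρ⁻¹ * ‖J v‖ ^ 2 := by
      field_simp
    rw [this]
  refine ⟨hb, ?_, ?_⟩
  · rw [hQnorm]; linarith
  · rw [hb, hQnorm, Real.mul_self_sqrt hS0]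
    have h2 : (1 : ℝ) / Real.sqrt 2 ≤ 1 := by
      rw [div_le_one (Real.sqrt_pos.mpr (by norm_num))]
      calc (1:ℝ) = Real.sqrt 1 := Real.sqrt_one.symm
        _ ≤ Real.sqrt 2 := Real.sqrt_le_sqrt (by norm_num)
    nlinarith [hS0, h2]
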